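/- Let ε̃, η > 0, S a finite index set, and for each P ∈ S let α_P ∈ [-η,η], β_P ∈ [0,1], x_P = α_P β_P. Suppose ∑_{P∈S} |α_P|^r ≤ A^r for some A > 0 and 1 ≤ r < 2. Given estimates with |x̂_P - x_P| < ηε̃ and |β̂_P - β_P| < ε̃ for all P, define α̂_P = x̂_P/β̂_P when β̂_P > 2ε̃ and |x̂_P|/β̂_P^(1/2) > 2η√ε̃, and α̂_P = 0 otherwise. Then ∑_{P∈S} β_P |α̂_P - α_P|² ≤ 6 A^r η^(2-r) ε̃^(1-r/2), and moreover β_P |α̂_P - α_P|² ≤ 9η²ε̃ for every P ∈ S. -/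

import Mathlib

open scoped BigOperators


lemma trade_core {s t E r : ℝ} (hs : 0 < s) (ht : 0 ≤ t) (hr1 : 1 ≤ r) (hr2 : r < 2)
    (h : (E ≤ 3 * s ^ 2 ∧ s ≤ t) ∨ (E ≤ t ^ 2 ∧ t ≤ 3 * s)) :
    E ≤ 3 * s ^ (2 - r) * t ^ r := by
  have h2r : (0:ℝ) ≤ 2 - r := by linarith
  rcases h with ⟨hE, hst⟩ | ⟨hE, hts⟩
  · calc E ≤ 3 * s ^ 2 := hE
    _ = 3 * (s ^ (2 - r) * s ^ r) := by
        rw [← Real.rpow_add hs, show (2 - r + r : ℝ) = ((2:ℕ):ℝ) by push_cast; ring,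
          Real.rpow_natCast]
    _ ≤ 3 * (s ^ (2 - r) * t ^ r) := by gcongr
    _ = 3 * s ^ (2 - r) * t ^ r := by ring
  · rcases eq_or_lt_of_le ht with h0 | h0
    · have hE0 : E ≤ 0 := by rw [← h0] at hE; simpa using hE
      have : (0:ℝ) ≤ 3 * s ^ (2 - r) * t ^ r := by positivity
      linarith
    · calc E ≤ t ^ 2 := hE
      _ = t ^ (2 - r) * t ^ r := by
          rw [← Real.rpow_add h0, show (2 - r + r : ℝ) = ((2:ℕ):ℝ) by push_cast; ring,
            Real.rpow_natCast]
      _ ≤ (3 * s) ^ (2 - r) * t ^ r := by gcongr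
      _ = 3 ^ (2 - r) * s ^ (2 - r) * t ^ r := by
          rw [Real.mul_rpow (by norm_num) hs.le]
      _ ≤ 3 * s ^ (2 - r) * t ^ r := by
          have h6 : (3:ℝ) ^ (2 - r) ≤ 3 := by
            calc (3:ℝ) ^ (2 - r) ≤ 3 ^ (1:ℝ) :=
                Real.rpow_le_rpow_of_exponent_le (by norm_num) (by linarith)
            _ = 3 := Real.rpow_one 3
          have h8 : (0:ℝ) ≤ s ^ (2 - r) := Real.rpow_nonneg hs.le _
          have h7 : (0:ℝ) ≤ t ^ r := Real.rpow_nonneg ht _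
          nlinarith [mul_le_mul_of_nonneg_right (mul_le_mul_of_nonneg_right h6 h8) h7]

set_option maxHeartbeats 2000000 in
lemma pointwise_bound (ε η a b xv xhv bhv ahv : ℝ) (hε : 0 < ε) (hη : 0 < η)
    (ha1 : -η ≤ a) (ha2 : a ≤ η) (hb0 : 0 ≤ b) (hb1 : b ≤ 1) (hx : xv = a * b)
    (hxh : |xhv - xv| < η * ε) (hbh : |bhv - b| < ε)
    (hah : ahv = if 2 * ε < bhv ∧ 2 * η * Real.sqrt ε < |xhv| / Real.sqrt bhv
      then xhv / bhv else 0) :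
    (b * |ahv - a| ^ 2 ≤ 3 * (η * Real.sqrt ε) ^ 2 ∧
        η * Real.sqrt ε ≤ |a| * Real.sqrt b) ∨
    (b * |ahv - a| ^ 2 ≤ (|a| * Real.sqrt b) ^ 2 ∧
        |a| * Real.sqrt b ≤ 3 * (η * Real.sqrt ε)) := by
  have haη : |a| ≤ η := abs_le.mpr ⟨ha1, ha2⟩
  have hu2 : Real.sqrt ε ^ 2 = ε := Real.sq_sqrt hε.le
  have hv2 : Real.sqrt b ^ 2 = b := Real.sq_sqrt hb0
  have hu0 : 0 < Real.sqrt ε := Real.sqrt_pos.mpr hε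
  have hv0 : 0 ≤ Real.sqrt b := Real.sqrt_nonneg b
  have hxb : |xhv - xv| ≤ |xhv - xv| := le_refl _
  by_cases hc : 2 * ε < bhv ∧ 2 * η * Real.sqrt ε < |xhv| / Real.sqrt bhv
  · -- unfiltered case
    left
    obtain ⟨hc1, hc2⟩ := hc
    have hbhv : 0 < bhv := by linarith
    have hsb : 0 < Real.sqrt bhv := Real.sqrt_pos.mpr hbhv
    have hsb2 : Real.sqrt bhv ^ 2 = bhv := Real.sq_sqrt hbhv.le
    rw [hah, if_pos ⟨hc1, hc2⟩]
    constructor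
    · -- error bound
      have key : |xhv / bhv - a| * bhv ≤ 2 * η * ε := by
        have heq : (xhv / bhv - a) * bhv = (xhv - xv) - a * (bhv - b) := by
          field_simp [hx]; rw [hx]; ring
        calc |xhv / bhv - a| * bhv = |(xhv / bhv - a) * bhv| := by
              rw [abs_mul, abs_of_pos hbhv]
        _ = |(xhv - xv) - a * (bhv - b)| := by rw [heq]
        _ ≤ |xhv - xv| + |a| * |bhv - b| := by
              calc |(xhv - xv) - a * (bhv - b)| ≤ |xhv - xv| + |a * (bhv - b)| :=
                    abs_sub _ _
              _ = |xhv - xv| + |a| * |bhv - b| := by rw [abs_mul]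
        _ ≤ 2 * η * ε := by nlinarith [abs_nonneg (bhv - b), abs_nonneg a]
      have hbb : b ≤ bhv + ε := by
        have := abs_lt.mp hbh; linarith [this.1]
      have hd0 : 0 ≤ |xhv / bhv - a| := abs_nonneg _
      have h1 : b * |xhv / bhv - a| ^ 2 * bhv ^ 2 ≤ 3 * (η * Real.sqrt ε) ^ 2 * bhv ^ 2 := by
        have hA2 : (|xhv / bhv - a| * bhv) ^ 2 ≤ (2 * η * ε) ^ 2 := by
          nlinarith [mul_nonneg hd0 hbhv.le]
        have e : 3 * (η * Real.sqrt ε) ^ 2 = 3 * η ^ 2 * ε := by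
          rw [mul_pow, hu2]; ring
        rw [e]
        have h5 : 4 * η ^ 2 * ε ^ 2 * (bhv + ε) ≤ 3 * η ^ 2 * ε * bhv ^ 2 := by
          nlinarith [mul_nonneg (mul_nonneg (sq_nonneg η) hε.le)
              (mul_nonneg hε.le (by linarith : (0:ℝ) ≤ bhv - 2 * ε)),
            mul_nonneg (mul_nonneg (sq_nonneg η) hε.le) (sq_nonneg (bhv - 2 * ε))]
        nlinarith [mul_le_mul_of_nonneg_left hA2 hb0,
          mul_le_mul_of_nonneg_right hbb (sq_nonneg (2 * η * ε))]
      exact le_of_mul_le_mul_right h1 (by positivity)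
    · -- lower bound on |a| * sqrt b
      have e2 : 2 * η * Real.sqrt ε * Real.sqrt bhv < |xhv| := (lt_div_iff₀ hsb).mp hc2
      have e1 : Real.sqrt ε ≤ (3/4) * Real.sqrt bhv := by
        have h' : ε ≤ (3/4) ^ 2 * bhv := by nlinarith
        calc Real.sqrt ε ≤ Real.sqrt ((3/4) ^ 2 * bhv) := Real.sqrt_le_sqrt h'
        _ = (3/4) * Real.sqrt bhv := by
            rw [Real.sqrt_mul (by positivity), Real.sqrt_sq (by norm_num)]
      have e3 : |xhv| - η * ε ≤ |xv| := by
        have := abs_sub_abs_le_abs_sub xhv xv; linarith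
      have e4 : η * ε ≤ η * Real.sqrt ε * ((3/4) * Real.sqrt bhv) := by
        have h := mul_le_mul_of_nonneg_left e1 (mul_nonneg hη.le hu0.le)
        calc η * ε = η * Real.sqrt ε * Real.sqrt ε := by
              rw [mul_assoc, Real.mul_self_sqrt hε.le]
        _ ≤ η * Real.sqrt ε * ((3/4) * Real.sqrt bhv) := h
      have e6 : (5/4) * (η * Real.sqrt ε * Real.sqrt bhv) < |xv| := by linarith
      have hbpos : 0 < b := by
        by_contra h
        push_neg at h
        have hb : b = 0 := le_antisymm h hb0
        rw [hx, hb, mul_zero, abs_zero] at e6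
        nlinarith [mul_pos (mul_pos hη hu0) hsb]
      have hsbb : 0 < Real.sqrt b := Real.sqrt_pos.mpr hbpos
      have hbb2 : b - ε < bhv := by
        have := abs_lt.mp hbh; linarith [this.1]
      have e5 : (4/5) * Real.sqrt b ≤ Real.sqrt bhv := by
        have h' : (4/5) ^ 2 * b ≤ bhv := by linarith
        calc (4/5) * Real.sqrt b = Real.sqrt ((4/5) ^ 2 * b) := by
              rw [Real.sqrt_mul (by positivity), Real.sqrt_sq (by norm_num)]
        _ ≤ Real.sqrt bhv := Real.sqrt_le_sqrt h'
      have e7 : η * Real.sqrt ε * Real.sqrt b < |xv| := by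
        have h := mul_le_mul_of_nonneg_left e5
          (by positivity : (0:ℝ) ≤ (5/4) * (η * Real.sqrt ε))
        nlinarith
      have e8 : |xv| = |a| * Real.sqrt b * Real.sqrt b := by
        rw [hx, abs_mul, abs_of_nonneg hb0, mul_assoc, Real.mul_self_sqrt hb0]
      rw [e8] at e7
      have := (mul_lt_mul_iff_of_pos_right hsbb).mp e7
      linarith
  · -- filtered case
    right
    rw [hah, if_neg hc]
    have hE : b * |(0:ℝ) - a| ^ 2 = (|a| * Real.sqrt b) ^ 2 := by
      rw [zero_sub, abs_neg, mul_pow, sq_abs, hv2]; ring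
    have ht3s : |a| * Real.sqrt b ≤ 3 * (η * Real.sqrt ε) := by
      by_cases h9 : b ≤ 9 * ε
      · have hsq : (|a| * Real.sqrt b) ^ 2 ≤ (3 * (η * Real.sqrt ε)) ^ 2 := by
          rw [mul_pow, sq_abs, hv2, mul_pow, mul_pow, hu2]
          have ha2' : a ^ 2 ≤ η ^ 2 := by nlinarith [sq_nonneg (η - a), sq_nonneg (η + a)]
          nlinarith [mul_le_mul_of_nonneg_right ha2' hb0,
            mul_le_mul_of_nonneg_left h9 (sq_nonneg η)]
        have h30 : 0 ≤ 3 * (η * Real.sqrt ε) := by positivity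
        nlinarith [mul_nonneg (abs_nonneg a) hv0]
      · push_neg at h9
        push_neg at hc
        have hbpos : 0 < b := by linarith
        have hsbb : 0 < Real.sqrt b := Real.sqrt_pos.mpr hbpos
        have hbhv : 2 * ε < bhv := by
          have := abs_lt.mp hbh; linarith [this.2]
        have hsb : 0 < Real.sqrt bhv := Real.sqrt_pos.mpr (by linarith)
        have h2 : |xhv| ≤ 2 * η * Real.sqrt ε * Real.sqrt bhv := by
          have := hc hbhv
          exact (div_le_iff₀ hsb).mp this
        have hbsum : bhv ≤ b + ε := by
          have := abs_lt.mp hbh; linarith [this.1]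
        have hsplit : Real.sqrt bhv ≤ Real.sqrt b + Real.sqrt ε := by
          calc Real.sqrt bhv ≤ Real.sqrt ((Real.sqrt b + Real.sqrt ε) ^ 2) := by
                apply Real.sqrt_le_sqrt
                nlinarith [mul_nonneg hv0 hu0.le]
          _ = Real.sqrt b + Real.sqrt ε := Real.sqrt_sq (by positivity)
        have hue : Real.sqrt ε ≤ Real.sqrt b / 3 := by
          have h' : (3:ℝ) ^ 2 * ε ≤ b := by nlinarith
          have : 3 * Real.sqrt ε ≤ Real.sqrt b := by
            calc 3 * Real.sqrt ε = Real.sqrt ((3:ℝ) ^ 2 * ε) := by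
                  rw [Real.sqrt_mul (by positivity), Real.sqrt_sq (by norm_num)]
            _ ≤ Real.sqrt b := Real.sqrt_le_sqrt h'
          linarith
        -- |a| * b = |xv| ≤ |xhv| + ηε ≤ 2η√ε(√b+√ε) + ηε ≤ 3η√ε√b
        have hxv : |a| * b ≤ 3 * (η * Real.sqrt ε) * Real.sqrt b := by
          have hxvb : |a| * b = |xv| := by
            rw [hx, abs_mul, abs_of_nonneg hb0]
          have h3 : |xv| ≤ |xhv| + η * ε := by
            have := abs_sub_abs_le_abs_sub xv xhv
            rw [abs_sub_comm] at this
            linarith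
          have hεe : ε = Real.sqrt ε * Real.sqrt ε := (Real.mul_self_sqrt hε.le).symm
          rw [hxvb]
          calc |xv| ≤ 2 * η * Real.sqrt ε * Real.sqrt bhv + η * ε := by linarith
          _ ≤ 2 * η * Real.sqrt ε * (Real.sqrt b + Real.sqrt ε) + η * ε := by
                nlinarith [mul_nonneg (mul_nonneg (by norm_num : (0:ℝ) ≤ 2) hη.le) hu0.le]
          _ ≤ 3 * (η * Real.sqrt ε) * Real.sqrt b := by nlinarith [mul_pos hη hu0]
        have : |a| * Real.sqrt b * Real.sqrt b ≤ 3 * (η * Real.sqrt ε) * Real.sqrt b := by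
          rw [mul_assoc, Real.mul_self_sqrt hb0]; exact hxv
        exact le_of_mul_le_mul_right this hsbb
    refine ⟨le_of_eq hE, ht3s⟩

lemma convert_bound {η ε a b r : ℝ} (hη : 0 < η) (hε : 0 < ε)
    (hb0 : 0 ≤ b) (hb1 : b ≤ 1) (hr0 : 0 ≤ r) :
    3 * (η * Real.sqrt ε) ^ (2 - r) * (|a| * Real.sqrt b) ^ r ≤
      3 * (η ^ (2 - r) * ε ^ (1 - r / 2)) * |a| ^ r := by
  have h1 : (η * Real.sqrt ε) ^ (2 - r) = η ^ (2 - r) * ε ^ (1 - r / 2) := by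
    rw [Real.mul_rpow hη.le (Real.sqrt_nonneg ε), Real.sqrt_eq_rpow,
      ← Real.rpow_mul hε.le, show (1 / 2 * (2 - r) : ℝ) = 1 - r / 2 by ring]
  have h2 : (|a| * Real.sqrt b) ^ r = |a| ^ r * Real.sqrt b ^ r :=
    Real.mul_rpow (abs_nonneg a) (Real.sqrt_nonneg b)
  have h3 : Real.sqrt b ^ r ≤ 1 :=
    Real.rpow_le_one (Real.sqrt_nonneg b) ((Real.sqrt_le_one.mpr hb1)) hr0
  rw [h1, h2]
  have h4 : (0:ℝ) ≤ |a| ^ r := Real.rpow_nonneg (abs_nonneg a) r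
  have h5 : (0:ℝ) ≤ η ^ (2 - r) * ε ^ (1 - r / 2) := by positivity
  nlinarith [mul_le_mul_of_nonneg_left (mul_le_mul_of_nonneg_left h3 h4) h5]

/-- Filtering lemma: thresholding on both small weight factors `β_P` and small
influences `|x̂_P| / √β̂_P` yields total error `≤ 6 A^r η^{2-r} ε̃^{1-r/2}` and
pointwise error `≤ 9 η² ε̃`. -/
theorem filtering_lemma {ι : Type*} (S : Finset ι)
    (ε η A r : ℝ) (α β x xh βh αh : ι → ℝ)
    (hε : 0 < ε) (hη : 0 < η) (hA : 0 < A) (hr1 : 1 ≤ r) (hr2 : r < 2)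
    (hα : ∀ P ∈ S, -η ≤ α P ∧ α P ≤ η)
    (hβ : ∀ P ∈ S, 0 ≤ β P ∧ β P ≤ 1)
    (hx : ∀ P ∈ S, x P = α P * β P)
    (hsum : ∑ P ∈ S, |α P| ^ r ≤ A ^ r)
    (hxh : ∀ P ∈ S, |xh P - x P| < η * ε)
    (hβh : ∀ P ∈ S, |βh P - β P| < ε)
    (hαh : ∀ P ∈ S, αh P =
      if 2 * ε < βh P ∧ 2 * η * Real.sqrt ε < |xh P| / Real.sqrt (βh P)
      then xh P / βh P else 0) :
    (∑ P ∈ S, β P * |αh P - α P| ^ 2 ≤ 6 * A ^ r * η ^ (2 - r) * ε ^ (1 - r / 2)) ∧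
    (∀ P ∈ S, β P * |αh P - α P| ^ 2 ≤ 9 * η ^ 2 * ε) := by
  have key : ∀ P ∈ S, β P * |αh P - α P| ^ 2 ≤
      3 * (η ^ (2 - r) * ε ^ (1 - r / 2)) * |α P| ^ r ∧
      β P * |αh P - α P| ^ 2 ≤ 9 * η ^ 2 * ε := by
    intro P hP
    have hd := pointwise_bound ε η (α P) (β P) (x P) (xh P) (βh P) (αh P) hε hη
      (hα P hP).1 (hα P hP).2 (hβ P hP).1 (hβ P hP).2 (hx P hP) (hxh P hP)
      (hβh P hP) (hαh P hP)
    have hs : 0 < η * Real.sqrt ε := by positivity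
    have ht : 0 ≤ |α P| * Real.sqrt (β P) := by positivity
    have hεq : (η * Real.sqrt ε) ^ 2 = η ^ 2 * ε := by
      rw [mul_pow, Real.sq_sqrt hε.le]
    constructor
    · have h1 := trade_core hs ht hr1 hr2 hd
      exact h1.trans (convert_bound hη hε (hβ P hP).1 (hβ P hP).2 (by linarith))
    · rcases hd with ⟨h1, _⟩ | ⟨h1, h2⟩
      · nlinarith [mul_pos (mul_pos hη hη) hε]
      · nlinarith [mul_le_mul h2 h2 ht (by positivity : (0:ℝ) ≤ 3 * (η * Real.sqrt ε))]
  refine ⟨?_, fun P hP => (key P hP).2⟩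
  have hc0 : (0:ℝ) ≤ η ^ (2 - r) * ε ^ (1 - r / 2) := by positivity
  have hAr : (0:ℝ) ≤ A ^ r := Real.rpow_nonneg hA.le r
  calc ∑ P ∈ S, β P * |αh P - α P| ^ 2
      ≤ ∑ P ∈ S, 3 * (η ^ (2 - r) * ε ^ (1 - r / 2)) * |α P| ^ r :=
        Finset.sum_le_sum fun P hP => (key P hP).1
  _ = 3 * (η ^ (2 - r) * ε ^ (1 - r / 2)) * ∑ P ∈ S, |α P| ^ r := by
        rw [Finset.mul_sum]
  _ ≤ 3 * (η ^ (2 - r) * ε ^ (1 - r / 2)) * A ^ r := by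
        have := mul_le_mul_of_nonneg_left hsum
          (by positivity : (0:ℝ) ≤ 3 * (η ^ (2 - r) * ε ^ (1 - r / 2)))
        linarith
  _ ≤ 6 * A ^ r * η ^ (2 - r) * ε ^ (1 - r / 2) := by
        nlinarith [mul_nonneg hAr hc0]
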